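/- Let G be a topological group acting continuously on a topological space M, with p ∈ M, and let ev : G → M be the evaluation map ev(f) = f(p). Then the image of the induced homomorphism ev_* : π₁(G, id) → π₁(M, p) is contained in the center of π₁(M, p). -/

import Mathlib

open CategoryTheory FundamentalGroupoid unitInterval Topology Topology.Homotopy

universe u v

noncomputable section

attribute [local instance] Path.Homotopic.setoid

/-- The homomorphism on fundamental groups induced by a continuous map. -/
def pi1Map {X Y : Type u} [TopologicalSpace X] [TopologicalSpace Y] (f : C(X, Y)) (x : X) :
    FundamentalGroup X x →* FundamentalGroup Y (f x) :=
  (πₘ (show TopCat.of X ⟶ TopCat.of Y from TopCat.ofHom f)).mapEnd ⟨x⟩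

/-- A Serre fibration: the homotopy lifting property with respect to all cubes. -/
def IsSerreFibration {E : Type u} {B : Type v} [TopologicalSpace E] [TopologicalSpace B]
    (p : C(E, B)) : Prop :=
  ∀ n : ℕ, ∀ (H : C((Fin n → I) × I, B)) (h₀ : C(Fin n → I, E)),
    (∀ y, p (h₀ y) = H (y, 0)) →
      ∃ H' : C((Fin n → I) × I, E), p.comp H' = H ∧ ∀ y, H' (y, 0) = h₀ y

/-- A space is aspherical if all of its homotopy groups in degrees `≥ 2` vanish. -/
def Aspherical (X : Type u) [TopologicalSpace X] : Prop :=
  ∀ n : ℕ, 2 ≤ n → ∀ x : X, Subsingleton (HomotopyGroup.Pi n X x)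

/-- A space admits a CW structure if it is homeomorphic to (the realization of)
a CW complex. -/
def HasCWStructure (X : Type u) [TopologicalSpace X] : Prop :=
  ∃ (Y : TopCat.{u}) (_K : TopCat.CWComplex Y), Nonempty (X ≃ₜ Y)


instance : ContractibleSpace I :=
  (convex_Icc (0:ℝ) 1).contractibleSpace (Set.nonempty_Icc.mpr zero_le_one)

instance {X Y : Type*} [TopologicalSpace X] [TopologicalSpace Y] [ContractibleSpace X]
    [ContractibleSpace Y] : ContractibleSpace (X × Y) := by
  rw [contractible_iff_id_nullhomotopic]
  obtain ⟨x₀, ⟨H₁⟩⟩ := id_nullhomotopic X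
  obtain ⟨y₀, ⟨H₂⟩⟩ := id_nullhomotopic Y
  exact ⟨(x₀, y₀), ⟨⟨⟨fun p => (H₁ (p.1, p.2.1), H₂ (p.1, p.2.2)), by fun_prop⟩,
    fun p => by simp, fun p => by simp⟩⟩⟩

lemma Path.Homotopic.cast' {X : Type*} [TopologicalSpace X] {x y x' y' : X}
    {p q : Path x y} (hx : x' = x) (hy : y' = y) (h : p.Homotopic q) :
    (p.cast hx hy).Homotopic (q.cast hx hy) := by
  subst hx; subst hy
  have h1 : p.cast rfl rfl = p := by ext t; rfl
  have h2 : q.cast rfl rfl = q := by ext t; rfl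
  rwa [h1, h2]

/-- The identity path from `0` to `1` in the unit interval. -/
def unitPath : Path (0:I) 1 := ⟨⟨id, continuous_id⟩, rfl, rfl⟩

/-- The key geometric fact: a loop in `M` coming from a loop in `G` via the evaluation
map commutes (up to homotopy) with any loop in `M`, by sweeping out the square
`(s, t) ↦ α s • β t`. -/
lemma key {G M : Type u} [Group G] [TopologicalSpace G]
    [IsTopologicalGroup G] [TopologicalSpace M]
    [MulAction G M] [ContinuousSMul G M]
    (ev : C(G, M)) (hev : ∀ g : G, ev g = g • ev 1)
    (α : Path (1:G) 1) (β : Path (ev 1) (ev 1)) :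
    ((α.map ev.continuous).trans β).Homotopic (β.trans (α.map ev.continuous)) := by
  set F : C(I × I, M) := ⟨fun q => α q.1 • β q.2,
    (α.continuous.comp continuous_fst).smul (β.continuous.comp continuous_snd)⟩ with hF
  set γ₀ : Path ((0:I), (0:I)) ((1:I), (1:I)) :=
    (unitPath.prod (Path.refl 0)).trans ((Path.refl 1).prod unitPath) with hγ₀
  set γ₁ : Path ((0:I), (0:I)) ((1:I), (1:I)) :=
    ((Path.refl 0).prod unitPath).trans (unitPath.prod (Path.refl 1)) with hγ₁
  have h₁ : ev 1 = F (0, 0) := by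
    show ev 1 = α 0 • β 0
    rw [α.source, β.source, one_smul]
  have h₂ : ev 1 = F (1, 1) := by
    show ev 1 = α 1 • β 1
    rw [α.target, β.target, one_smul]
  have hA : (α.map ev.continuous).trans β = (γ₀.map F.continuous).cast h₁ h₂ := by
    ext t
    show ((α.map ev.continuous).trans β) t = (γ₀.map F.continuous) t
    rw [Path.map_coe]
    simp only [Path.trans_apply, hγ₀, Function.comp_apply, Path.map_coe]
    split_ifs with h
    · show ev (α _) = F ((unitPath.prod (Path.refl 0)) _)
      show ev (α _) = α _ • β 0
      rw [β.source, hev]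
      rfl
    · show β _ = F (((Path.refl 1).prod unitPath) _)
      show β _ = α 1 • β _
      rw [α.target, one_smul]
      rfl
  have hB : β.trans (α.map ev.continuous) = (γ₁.map F.continuous).cast h₁ h₂ := by
    ext t
    show (β.trans (α.map ev.continuous)) t = (γ₁.map F.continuous) t
    rw [Path.map_coe]
    simp only [Path.trans_apply, hγ₁, Function.comp_apply, Path.map_coe]
    split_ifs with h
    · show β _ = F (((Path.refl 0).prod unitPath) _)
      show β _ = α 0 • β _
      rw [α.source, one_smul]
      rfl
    · show ev (α _) = F ((unitPath.prod (Path.refl 1)) _)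
      show ev (α _) = α _ • β 1
      rw [β.target, hev]
      rfl
  rw [hA, hB]
  exact Path.Homotopic.cast' h₁ h₂
    (Path.Homotopic.map (SimplyConnectedSpace.paths_homotopic γ₀ γ₁) F)

/-- Let `G` be a topological group acting continuously on a
(path-connected) topological space `M`, with `p ∈ M`, and let `ev : G → M` be the
evaluation map `ev(f) = f(p)`.  Then the image of the induced homomorphism
`ev⁎ : π₁(G, 1) → π₁(M, p)` is contained in the center of `π₁(M, p)`. -/
theorem evaluation_image_central {G M : Type u} [Group G] [TopologicalSpace G]
    [IsTopologicalGroup G] [TopologicalSpace M] [PathConnectedSpace M]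
    [MulAction G M] [ContinuousSMul G M] (p : M)
    (ev : C(G, M)) (hev : ∀ g : G, ev g = g • p) (hb : ev 1 = p) :
    ∀ a : FundamentalGroup G 1,
      (hb ▸ pi1Map ev 1 a : FundamentalGroup M p) ∈
        Subgroup.center (FundamentalGroup M p) := by
  subst hb
  intro a
  show pi1Map ev 1 a ∈ Subgroup.center _
  rw [Subgroup.mem_center_iff]
  intro b
  show pi1Map ev 1 a ≫ b = b ≫ pi1Map ev 1 a
  show (πₘ (show TopCat.of G ⟶ TopCat.of M from TopCat.ofHom ev)).map a ≫ b
      = b ≫ (πₘ (show TopCat.of G ⟶ TopCat.of M from TopCat.ofHom ev)).map a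
  induction a using Quotient.inductionOn with
  | h α =>
  induction b using Quotient.inductionOn with
  | h β =>
  exact Quotient.sound (key ev hev α β)

end
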